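/- arXiv:0911.2287 — 2 statements merged into one kernel-verified Lean document; each statement's English description precedes it below -/
import Mathlib

section
/- Let s₁, …, s_l be nonzero homogeneous elements of R, say s_j ∈ R_{d_j}. Assume that for every d ∈ D and every value γ ∈ ν(R_d ∖ {0}) there exist nonnegative integers m₁, …, m_l with Σ_j m_j d_j = d and Σ_j m_j ν(s_j) = γ. Then R equals the k-subalgebra generated by s₁, …, s_l. (This is the algebraic engine of Proposition 5.2, where it yields the finite generation of the Cox ring R = ⊕ H⁰(P(E), O(w) ⊗ π*O(Σ w_i D_i)) from the finite generation of the semigroup of valuation vectors.) -/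
/-- The algebraic engine of Proposition 5.2: if homogeneous elements `s 1, …, s l` of a
graded domain `R` realize (via monomials) every valuation vector of every graded piece,
then they generate `R` as a `k`-algebra. -/
theorem adjoin_eq_top_of_valuation_semigroup_generated
    {k R Γ D : Type*} [Field k] [CommRing R] [IsDomain R] [Algebra k R]
    [AddCommGroup Γ] [LinearOrder Γ] [IsOrderedAddMonoid Γ] [AddCommMonoid D] [DecidableEq D]
    (Rg : D → Submodule k R) [GradedAlgebra Rg]
    (hfin : ∀ d : D, FiniteDimensional k (Rg d))
    (ν : R → Γ)
    (hscal : ∀ (c : k) (s : R), c ≠ 0 → s ≠ 0 → ν (c • s) = ν s)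
    (hadd : ∀ s t : R, s ≠ 0 → t ≠ 0 → s + t ≠ 0 → min (ν s) (ν t) ≤ ν (s + t))
    (hmul : ∀ s t : R, s ≠ 0 → t ≠ 0 → ν (s * t) = ν s + ν t)
    (Rge Rgt : Γ → Submodule k R)
    (hRge : ∀ a : Γ, (Rge a : Set R) = {0} ∪ {s : R | s ≠ 0 ∧ a ≤ ν s})
    (hRgt : ∀ a : Γ, (Rgt a : Set R) = {0} ∪ {s : R | s ≠ 0 ∧ a < ν s})
    (hleaf : ∀ a : Γ,
      Module.rank k (↥(Rge a) ⧸ (Rgt a).comap (Rge a).subtype) ≤ 1)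
    {l : ℕ} (s : Fin l → R) (hs0 : ∀ j, s j ≠ 0)
    (dg : Fin l → D) (hhom : ∀ j, s j ∈ Rg (dg j))
    (hgen : ∀ (e : D), ∀ γ ∈ ν '' ((Rg e : Set R) \ {0}),
      ∃ m : Fin l → ℕ, (∑ j, m j • dg j) = e ∧ (∑ j, m j • ν (s j)) = γ) :
    Algebra.adjoin k (Set.range s) = ⊤ := by
  classical
  set A := Algebra.adjoin k (Set.range s) with hA
  -- membership characterizations
  have hmemge : ∀ (a : Γ) (x : R), x ∈ Rge a ↔ x = 0 ∨ (x ≠ 0 ∧ a ≤ ν x) := by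
    intro a x
    rw [← SetLike.mem_coe, hRge a]
    simp [Set.mem_union]
  have hmemgt : ∀ (a : Γ) (x : R), x ∈ Rgt a ↔ x = 0 ∨ (x ≠ 0 ∧ a < ν x) := by
    intro a x
    rw [← SetLike.mem_coe, hRgt a]
    simp [Set.mem_union]
  have hge_mono : ∀ {a b : Γ}, a ≤ b → Rge b ≤ Rge a := by
    intro a b hab x hx
    rw [hmemge] at hx ⊢
    rcases hx with h | ⟨h1, h2⟩
    · exact Or.inl h
    · exact Or.inr ⟨h1, hab.trans h2⟩
  -- ν 1 = 0
  have hnu1 : ν (1 : R) = 0 := by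
    have h := hmul 1 1 one_ne_zero one_ne_zero
    rw [mul_one] at h
    have : ν (1 : R) + 0 = ν 1 + ν 1 := by rw [add_zero]; exact h
    exact (add_left_cancel this).symm
  -- ν of powers
  have hpow : ∀ (x : R), x ≠ 0 → ∀ n : ℕ, ν (x ^ n) = n • ν x := by
    intro x hx n
    induction n with
    | zero => simpa using hnu1
    | succ n ih =>
      rw [pow_succ, hmul _ _ (pow_ne_zero _ hx) hx, ih, succ_nsmul]
  -- ν of products
  have hprod : ∀ (F : Finset (Fin l)) (f : Fin l → R), (∀ i ∈ F, f i ≠ 0) →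
      ν (∏ i ∈ F, f i) = ∑ i ∈ F, ν (f i) := by
    intro F
    induction F using Finset.induction with
    | empty => intro f _; simpa using hnu1
    | @insert j F hj ih =>
      intro f hf
      have hfne : ∏ i ∈ F, f i ≠ 0 :=
        Finset.prod_ne_zero_iff.mpr fun i hi => hf i (Finset.mem_insert_of_mem hi)
      rw [Finset.prod_insert hj, Finset.sum_insert hj,
        hmul _ _ (hf j (Finset.mem_insert_self _ _)) hfne,
        ih f fun i hi => hf i (Finset.mem_insert_of_mem hi)]
  -- the key induction
  have key : ∀ (n : ℕ) (e : D) (t : R), t ∈ Rg e → t ≠ 0 →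
      Module.finrank k ↥(Rg e ⊓ Rge (ν t)) ≤ n → t ∈ A := by
    intro n
    induction n with
    | zero =>
      intro e t ht htne hrk
      exfalso
      haveI := hfin e
      haveI : FiniteDimensional k ↥(Rg e ⊓ Rge (ν t)) :=
        Submodule.finiteDimensional_of_le inf_le_left
      have htmem : t ∈ Rg e ⊓ Rge (ν t) :=
        ⟨ht, (hmemge _ _).mpr (Or.inr ⟨htne, le_rfl⟩)⟩
      have : Nontrivial ↥(Rg e ⊓ Rge (ν t)) :=
        ⟨⟨t, htmem⟩, 0, by simp [Subtype.ext_iff, htne]⟩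
      have := Module.finrank_pos (R := k) (M := ↥(Rg e ⊓ Rge (ν t)))
      omega
    | succ n ih =>
      intro e t ht htne hrk
      haveI := hfin e
      haveI : FiniteDimensional k ↥(Rg e ⊓ Rge (ν t)) :=
        Submodule.finiteDimensional_of_le inf_le_left
      set γ := ν t with hγ
      obtain ⟨m, hmd, hmγ⟩ := hgen e γ ⟨t, ⟨ht, htne⟩, rfl⟩
      set u := ∏ j, (s j) ^ (m j) with hu
      have hune : u ≠ 0 :=
        Finset.prod_ne_zero_iff.mpr fun j _ => pow_ne_zero _ (hs0 j)
      have humem : u ∈ Rg e := by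
        rw [← hmd]
        exact SetLike.prod_pow_mem_graded Rg dg s m fun j _ => hhom j
      have hνu : ν u = γ := by
        rw [hu, hprod _ _ fun j _ => pow_ne_zero _ (hs0 j)]
        rw [← hmγ]
        exact Finset.sum_congr rfl fun j _ => hpow (s j) (hs0 j) (m j)
      have huA : u ∈ A := by
        refine Subalgebra.prod_mem A fun j _ => Subalgebra.pow_mem A ?_ _
        exact Algebra.subset_adjoin ⟨j, rfl⟩
      -- use the one-dimensional-leaves property at γ
      have htge : t ∈ Rge γ := (hmemge _ _).mpr (Or.inr ⟨htne, le_rfl⟩)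
      have huge : u ∈ Rge γ := (hmemge _ _).mpr (Or.inr ⟨hune, hνu.ge⟩)
      set K : Submodule k ↥(Rge γ) := (Rgt γ).comap (Rge γ).subtype with hK
      set π := K.mkQ with hπ
      obtain ⟨v₀, hv₀⟩ := rank_le_one_iff.mp (hleaf γ)
      obtain ⟨a, ha⟩ := hv₀ (π ⟨u, huge⟩)
      obtain ⟨b, hb⟩ := hv₀ (π ⟨t, htge⟩)
      have hπu : π ⟨u, huge⟩ ≠ 0 := by
        simp only [hπ, Submodule.mkQ_apply, ne_eq, Submodule.Quotient.mk_eq_zero]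
        intro hmem
        have : u ∈ Rgt γ := hmem
        rw [hmemgt] at this
        rcases this with h | ⟨_, h2⟩
        · exact hune h
        · rw [hνu] at h2; exact lt_irrefl _ h2
      have hane : a ≠ 0 := by
        intro h; rw [h, zero_smul] at ha; exact hπu ha.symm
      set c := b * a⁻¹ with hc
      have hdiff : t - c • u ∈ Rgt γ := by
        have hπdiff : π (⟨t, htge⟩ - c • ⟨u, huge⟩) = 0 := by
          rw [map_sub, map_smul, ← hb, ← ha, hc, smul_smul]
          rw [mul_assoc, inv_mul_cancel₀ hane, mul_one, sub_self]
        rw [hπ, Submodule.mkQ_apply, Submodule.Quotient.mk_eq_zero] at hπdiff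
        exact hπdiff
      by_cases ht' : t - c • u = 0
      · have : t = c • u := by rw [sub_eq_zero] at ht'; exact ht'
        rw [this]
        exact Subalgebra.smul_mem A huA c
      · -- t' ≠ 0, so ν t' > γ and we can apply the induction hypothesis
        set t' := t - c • u with ht'def
        have hνt' : γ < ν t' := by
          have := (hmemgt γ t').mp hdiff
          rcases this with h | ⟨_, h2⟩
          · exact absurd h ht'
          · exact h2
        have ht'mem : t' ∈ Rg e := sub_mem ht (Submodule.smul_mem _ c humem)
        have hlt : Rg e ⊓ Rge (ν t') < Rg e ⊓ Rge γ := by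
          refine lt_of_le_of_ne (inf_le_inf_left _ (hge_mono hνt'.le)) ?_
          intro hEq
          have htmem : t ∈ Rg e ⊓ Rge γ := ⟨ht, htge⟩
          rw [← hEq] at htmem
          have : t ∈ Rge (ν t') := htmem.2
          rw [hmemge] at this
          rcases this with h | ⟨_, h2⟩
          · exact htne h
          · exact absurd (lt_of_lt_of_le hνt' h2) (lt_irrefl γ)
        have hrk' : Module.finrank k ↥(Rg e ⊓ Rge (ν t')) ≤ n := by
          have := Submodule.finrank_lt_finrank_of_lt hlt
          omega
        have ht'A : t' ∈ A := ih e t' ht'mem ht' hrk'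
        have : t = c • u + t' := by rw [ht'def]; ring_nf
        rw [this]
        exact Subalgebra.add_mem A (Subalgebra.smul_mem A huA c) ht'A
  -- conclude by decomposing arbitrary elements
  rw [eq_top_iff]
  intro r _
  rw [← DirectSum.sum_support_decompose Rg r]
  refine Subalgebra.sum_mem A fun e _ => ?_
  by_cases h0 : (DirectSum.decompose Rg r e : R) = 0
  · rw [h0]; exact Subalgebra.zero_mem A
  · exact key _ e _ (SetLike.coe_mem _) h0 le_rfl
end

section
/- For every i ∈ ℤ, the submodule Σ_{(i₁,…,i_m) ∈ ℤ^m, i₁+⋯+i_m=i} W(i₁)·W(i₂)⋯W(i_m) of k[x,y] (sum of products of submodules, each summand lying in k[x,y]_m) equals: k[x,y]_m if i ≤ am; the subspace {g ∈ k[x,y]_m : f^{⌈(i−am)/(b−a)⌉} divides g} if am < i ≤ bm; and 0 if i > bm. (This is the content of Example 3.5 of the paper: the Klyachko filtration of Sym^m(E) for a rank two toric vector bundle E whose filtration along a ray is E for i ≤ a, a line V for a < i ≤ b, and 0 for i > b, expressed in polynomial terms via the identification Sym^m E ≅ k[x,y]_m sending V to the span of f.) -/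
open MvPolynomial Submodule

private lemma span_singleton_pow' {R A : Type*} [CommSemiring R] [CommSemiring A] [Algebra R A]
    (x : A) (n : ℕ) : (span R {x}) ^ n = span R {x ^ n} := by
  induction n with
  | zero => simp [one_eq_span]
  | succ n ih => rw [pow_succ, ih, span_mul_span, Set.singleton_mul_singleton, pow_succ]

private lemma prod_mono' {R A : Type*} [CommSemiring R] [CommSemiring A] [Algebra R A]
    {ι : Type*} (s : Finset ι) (f g : ι → Submodule R A) (h : ∀ j ∈ s, f j ≤ g j) :
    ∏ j ∈ s, f j ≤ ∏ j ∈ s, g j := by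
  classical
  induction s using Finset.induction with
  | empty => simp
  | insert _ _ hx ih =>
    rw [Finset.prod_insert hx, Finset.prod_insert hx]
    exact mul_le_mul' (h _ (Finset.mem_insert_self _ _))
      (ih fun j hj => h j (Finset.mem_insert_of_mem hj))

private lemma hom_pow {k : Type*} [CommSemiring k] (σ : Type*) (n : ℕ) :
    (homogeneousSubmodule σ k 1) ^ n = homogeneousSubmodule σ k n := by
  classical
  induction n with
  | zero =>
    apply le_antisymm
    · rw [pow_zero, one_eq_span, span_le, Set.singleton_subset_iff]
      exact isHomogeneous_one σ k
    · intro p hp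
      have hc : p = C (coeff 0 p) := by
        rw [← homogeneousComponent_zero, homogeneousComponent_of_mem hp, if_pos rfl]
      rw [pow_zero, hc]
      exact ⟨coeff 0 p, by simp [LinearMap.toSpanSingleton_apply, smul_eq_C_mul]⟩
  | succ n ih =>
    apply le_antisymm
    · rw [pow_succ, ih]
      simpa [add_comm] using homogeneousSubmodule_mul (σ := σ) (R := k) n 1
    · intro p hp
      rw [pow_succ', ih]
      have hp' : p.IsHomogeneous (n + 1) := hp
      rw [← p.support_sum_monomial_coeff]
      apply sum_mem
      intro d hd
      have hdeg : d.degree = n + 1 := by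
        rw [Finsupp.degree_eq_weight_one]
        exact hp' (mem_support_iff.mp hd)
      obtain ⟨j, hj⟩ : ∃ j, d j ≠ 0 := by
        by_contra h; push_neg at h
        have hd0 : d = 0 := Finsupp.ext fun j => h j
        simp [hd0] at hdeg
      have hle : Finsupp.single j 1 ≤ d :=
        Finsupp.single_le_iff.mpr (Nat.one_le_iff_ne_zero.mpr hj)
      have hsum : Finsupp.single j 1 + (d - Finsupp.single j 1) = d :=
        add_tsub_cancel_of_le hle
      have hdeg' : (d - Finsupp.single j 1).degree = n := by
        have h2 : (Finsupp.single j 1).degree + (d - Finsupp.single j 1).degree = d.degree := by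
          rw [Finsupp.degree_eq_weight_one, ← map_add, hsum]
        have h1 : (Finsupp.single j 1).degree = 1 := by
          simp [Finsupp.degree_eq_weight_one, Finsupp.weight_apply]
        omega
      have hmono : monomial d (coeff d p)
          = X j * monomial (d - Finsupp.single j 1) (coeff d p) := by
        set c := coeff d p with hc
        conv_lhs => rw [← hsum]
        rw [monomial_single_add, pow_one]
      rw [hmono]
      exact mul_mem_mul (isHomogeneous_X k j) (isHomogeneous_monomial _ hdeg')

private lemma comp_mul {k σ : Type*} [CommSemiring k] {p : MvPolynomial σ k} {c : ℕ}
    (hp : p.IsHomogeneous c) (q : MvPolynomial σ k) {n : ℕ} (hcn : c ≤ n) :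
    homogeneousComponent n (p * q) = p * homogeneousComponent (n - c) q := by
  classical
  ext d
  rw [coeff_homogeneousComponent, coeff_mul, coeff_mul]
  have hsplit : (if d.degree = n then
        ∑ x ∈ Finset.HasAntidiagonal.antidiagonal d, coeff x.1 p * coeff x.2 q else 0)
      = ∑ x ∈ Finset.HasAntidiagonal.antidiagonal d,
          if d.degree = n then coeff x.1 p * coeff x.2 q else 0 := by
    split_ifs <;> simp
  rw [hsplit]
  refine Finset.sum_congr rfl fun x hx => ?_
  rcases eq_or_ne (coeff x.1 p) 0 with h | h
  · simp [h]
  · have hu : x.1.degree = c := by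
      rw [Finsupp.degree_eq_weight_one]; exact hp h
    have hdd : d.degree = x.1.degree + x.2.degree := by
      rw [← Finset.HasAntidiagonal.mem_antidiagonal.mp hx, Finsupp.degree_eq_weight_one, map_add]
    rw [coeff_homogeneousComponent]
    by_cases h2 : x.2.degree = n - c
    · rw [if_pos (by omega), if_pos h2]
    · rw [if_neg (by omega), if_neg h2, mul_zero]

private lemma mem_span_pow_mul_hom {k σ : Type*} [CommSemiring k] {f g : MvPolynomial σ k}
    (hf : f.IsHomogeneous 1) {c m : ℕ} (hcm : c ≤ m)
    (hg : g ∈ homogeneousSubmodule σ k m) (hdvd : f ^ c ∣ g) :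
    g ∈ span k {f ^ c} * homogeneousSubmodule σ k (m - c) := by
  obtain ⟨h, rfl⟩ := hdvd
  rw [mem_span_singleton_mul]
  refine ⟨homogeneousComponent (m - c) h, homogeneousComponent_mem _ _, ?_⟩
  have hfc : (f ^ c).IsHomogeneous c := by simpa using hf.pow c
  calc f ^ c * homogeneousComponent (m - c) h
      = homogeneousComponent m (f ^ c * h) := (comp_mul hfc h hcm).symm
    _ = f ^ c * h := by rw [homogeneousComponent_of_mem hg, if_pos rfl]

private lemma mem_of_mem_span_pow_mul_hom {k σ : Type*} [CommSemiring k] {f g : MvPolynomial σ k}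
    (hf : f.IsHomogeneous 1) {c m : ℕ} (hcm : c ≤ m)
    (hg : g ∈ span k {f ^ c} * homogeneousSubmodule σ k (m - c)) :
    g ∈ homogeneousSubmodule σ k m ∧ f ^ c ∣ g := by
  rw [mem_span_singleton_mul] at hg
  obtain ⟨z, hz, rfl⟩ := hg
  have hfc : (f ^ c).IsHomogeneous c := by simpa using hf.pow c
  refine ⟨?_, Dvd.intro _ rfl⟩
  have hmul := hfc.mul ((mem_homogeneousSubmodule _ _).mp hz)
  rwa [Nat.add_sub_cancel' hcm] at hmul

private lemma card_filter_le_card {ι : Type*} [Fintype ι] (p : ι → Prop) [DecidablePred p] :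
    (Finset.univ.filter p).card ≤ Fintype.card ι :=
  le_trans (Finset.card_filter_le _ _) (by simp)

private lemma prod_ite_card {M : Type*} [CommMonoid M] {ι : Type*} [Fintype ι]
    (p : ι → Prop) [DecidablePred p] (A B : M) :
    ∏ x : ι, (if p x then A else B)
      = A ^ (Finset.univ.filter p).card
        * B ^ (Fintype.card ι - (Finset.univ.filter p).card) := by
  rw [Finset.prod_ite, Finset.prod_const, Finset.prod_const]
  congr 2
  have h1 := Finset.card_filter_add_card_filter_not
    (s := (Finset.univ : Finset ι)) p
  have h2 := card_filter_le_card p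
  simp only [Finset.card_univ] at h1
  omega

private lemma sum_ite_card {ι : Type*} [Fintype ι] (p : ι → Prop) [DecidablePred p] (y₁ y₂ : ℤ) :
    ∑ x : ι, (if p x then y₁ else y₂)
      = ((Finset.univ.filter p).card : ℤ) * y₁
        + ((Fintype.card ι - (Finset.univ.filter p).card : ℕ) : ℤ) * y₂ := by
  rw [Finset.sum_ite, Finset.sum_const, Finset.sum_const]
  have h1 := Finset.card_filter_add_card_filter_not
    (s := (Finset.univ : Finset ι)) p
  have h2 := card_filter_le_card p
  simp only [Finset.card_univ] at h1
  have h3 : (Finset.univ.filter fun x => ¬ p x).card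
      = Fintype.card ι - (Finset.univ.filter p).card := by omega
  rw [h3]
  simp [nsmul_eq_mul]

private lemma card_lt_filter (m c : ℕ) (h : c ≤ m) :
    (Finset.univ.filter (fun x : Fin m => (x : ℕ) < c)).card = c := by
  refine Finset.card_bij (s := Finset.univ.filter (fun x : Fin m => (x : ℕ) < c))
    (t := Finset.range c) (fun x _ => (x : ℕ)) ?_ ?_ ?_ |>.trans (Finset.card_range c)
  · intro x hx; simp at hx ⊢; omega
  · intro x hx y hy hxy; exact Fin.ext hxy
  · intro y hy
    simp at hy
    exact ⟨⟨y, lt_of_lt_of_le hy h⟩, by simp [hy], rfl⟩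

/-- Example 3.5: the Klyachko filtration of `Sym^m E` for a rank two toric vector
bundle, expressed in `k[x,y]`. Here `W i` is the degree-one filtration (all of
`k[x,y]₁` for `i ≤ a`, the line `k·f` for `a < i ≤ b`, and `0` for `i > b`), and the
`m`-fold sum of products `Σ_{i₁+⋯+i_m=i} W i₁ ⋯ W i_m` is computed in the three
ranges of `i`. -/
theorem sym_filtration_rank_two
    {k : Type*} [Field k] (f : MvPolynomial (Fin 2) k)
    (hf1 : f.IsHomogeneous 1) (hf0 : f ≠ 0)
    (a b : ℤ) (hab : a < b) (m : ℕ) (hm : 1 ≤ m)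
    (W : ℤ → Submodule k (MvPolynomial (Fin 2) k))
    (hWa : ∀ i : ℤ, i ≤ a → W i = MvPolynomial.homogeneousSubmodule (Fin 2) k 1)
    (hWb : ∀ i : ℤ, a < i → i ≤ b → W i = Submodule.span k {f})
    (hWc : ∀ i : ℤ, b < i → W i = ⊥)
    (i : ℤ) :
    (i ≤ a * m →
      (⨆ t ∈ {t : Fin m → ℤ | ∑ h, t h = i}, ∏ h, W (t h)) =
        MvPolynomial.homogeneousSubmodule (Fin 2) k m) ∧
    (a * m < i → i ≤ b * m →
      ((⨆ t ∈ {t : Fin m → ℤ | ∑ h, t h = i}, ∏ h, W (t h) :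
          Submodule k (MvPolynomial (Fin 2) k)) : Set (MvPolynomial (Fin 2) k)) =
        {g | g ∈ MvPolynomial.homogeneousSubmodule (Fin 2) k m ∧
          f ^ (⌈(((i - a * m : ℤ) : ℚ)) / (((b - a : ℤ) : ℚ))⌉.toNat) ∣ g}) ∧
    (b * m < i →
      (⨆ t ∈ {t : Fin m → ℤ | ∑ h, t h = i}, ∏ h, W (t h)) = ⊥) := by
  classical
  have hW1 : ∀ j : ℤ, W j ≤ homogeneousSubmodule (Fin 2) k 1 := by
    intro j
    rcases le_or_gt j a with h | h
    · rw [hWa j h]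
    · rcases le_or_gt j b with h' | h'
      · rw [hWb j h h', span_le, Set.singleton_subset_iff]; exact hf1
      · rw [hWc j h']; exact bot_le
  refine ⟨?_, ?_, ?_⟩
  · -- Part 1 : i ≤ a * m
    intro hi
    apply le_antisymm
    · apply iSup₂_le; intro t ht
      refine le_trans (prod_mono' _ _ (fun _ => homogeneousSubmodule (Fin 2) k 1)
        (fun j _ => hW1 _)) ?_
      rw [Finset.prod_const, Finset.card_univ, Fintype.card_fin, hom_pow]
    · have hm0 : 0 < m := hm
      set z : Fin m := ⟨0, hm0⟩ with hz
      set t₀ : Fin m → ℤ := fun h => (if h = z then i - a * m else 0) + a with ht₀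
      have hsum : ∑ h, t₀ h = i := by
        simp only [ht₀, Finset.sum_add_distrib, Finset.sum_ite_eq', Finset.mem_univ, if_true,
          Finset.sum_const, Finset.card_univ, Fintype.card_fin, nsmul_eq_mul]
        ring
      have hval : ∀ h, W (t₀ h) = homogeneousSubmodule (Fin 2) k 1 := by
        intro h
        apply hWa
        by_cases hhz : h = z <;> simp only [ht₀, hhz, if_pos, if_neg, if_true] <;> simp <;> omega
      have hprod : ∏ h, W (t₀ h) = homogeneousSubmodule (Fin 2) k m := by
        rw [Finset.prod_congr rfl (fun h _ => hval h), Finset.prod_const, Finset.card_univ,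
          Fintype.card_fin, hom_pow]
      exact le_iSup₂_of_le t₀ hsum hprod.ge
  · -- Part 2 : a*m < i ≤ b*m
    intro h1 h2
    set c := (⌈(((i - a * m : ℤ) : ℚ)) / (((b - a : ℤ) : ℚ))⌉).toNat with hc
    set q : ℚ := (((i - a * m : ℤ) : ℚ)) / (((b - a : ℤ) : ℚ)) with hq
    have hba : (0 : ℚ) < ((b - a : ℤ) : ℚ) := by exact_mod_cast sub_pos.mpr hab
    have key : ∀ s : ℤ, ⌈q⌉ ≤ s ↔ i - a * m ≤ s * (b - a) := by
      intro s
      rw [Int.ceil_le, hq, div_le_iff₀ hba]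
      constructor <;> intro h <;> exact_mod_cast h
    have hCpos : 0 < ⌈q⌉ :=
      Int.ceil_pos.mpr (div_pos (by exact_mod_cast sub_pos.mpr h1) hba)
    have hcC : (c : ℤ) = ⌈q⌉ := Int.toNat_of_nonneg (le_of_lt hCpos)
    have hcm : c ≤ m := by
      have hm' : ⌈q⌉ ≤ (m : ℤ) := (key m).mpr (by nlinarith)
      omega
    have hclb : (⌈q⌉ - 1) * (b - a) < i - a * m := by
      by_contra hcon
      push_neg at hcon
      have := (key (⌈q⌉ - 1)).mpr hcon
      omega
    have hcub : i - a * m ≤ ⌈q⌉ * (b - a) := (key ⌈q⌉).mp le_rfl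
    have hc1 : 1 ≤ c := by omega
    set M := span k {f ^ c} * homogeneousSubmodule (Fin 2) k (m - c) with hM
    have hTM : (⨆ t ∈ {t : Fin m → ℤ | ∑ h, t h = i}, ∏ h, W (t h)) = M := by
      apply le_antisymm
      · apply iSup₂_le; intro t ht
        have ht' : ∑ h, t h = i := ht
        by_cases hbig : ∃ h, b < t h
        · obtain ⟨h0, hh0⟩ := hbig
          have hzero : ∏ h, W (t h) = 0 :=
            Finset.prod_eq_zero (Finset.mem_univ h0)
              (by rw [hWc _ hh0, Submodule.zero_eq_bot])
          rw [hzero, Submodule.zero_eq_bot]; exact bot_le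
        · push_neg at hbig
          set s := (Finset.univ.filter (fun h : Fin m => a < t h)).card with hs
          have hsm : s ≤ m := by
            have := card_filter_le_card (fun h : Fin m => a < t h)
            simpa using this
          have hstep : ∏ h, W (t h)
              ≤ (span k {f}) ^ s * (homogeneousSubmodule (Fin 2) k 1) ^ (m - s) := by
            refine le_trans (prod_mono' _ _
              (fun h => if a < t h then span k {f} else homogeneousSubmodule (Fin 2) k 1)
              ?_) ?_
            · intro j _
              try dsimp only
              by_cases hj : a < t j
              · rw [if_pos hj, hWb _ hj (hbig j)]
              · rw [if_neg hj, hWa _ (not_lt.mp hj)]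
            · rw [prod_ite_card]
              simp only [Fintype.card_fin]
              exact le_rfl
          have hsc : c ≤ s := by
            have hsum_le : i ≤ (s : ℤ) * b + ((m - s : ℕ) : ℤ) * a := by
              have hle : ∑ h, t h ≤ ∑ h : Fin m, (if a < t h then b else a) :=
                Finset.sum_le_sum fun h _ => by
                  by_cases hj : a < t h
                  · rw [if_pos hj]; exact hbig h
                  · rw [if_neg hj]; exact not_lt.mp hj
              rw [ht', sum_ite_card] at hle
              simpa [Fintype.card_fin] using hle
            have hms : ((m - s : ℕ) : ℤ) = (m : ℤ) - s := by
              rw [Nat.cast_sub hsm]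
            have hkey : i - a * m ≤ (s : ℤ) * (b - a) := by
              rw [hms] at hsum_le; ring_nf; ring_nf at hsum_le; linarith
            have := (key s).mpr hkey
            omega
          calc ∏ h, W (t h)
              ≤ (span k {f}) ^ s * (homogeneousSubmodule (Fin 2) k 1) ^ (m - s) := hstep
            _ = span k {f ^ s} * homogeneousSubmodule (Fin 2) k (m - s) := by
                rw [span_singleton_pow', hom_pow]
            _ ≤ M := by
                have hfs : f ^ s = f ^ c * f ^ (s - c) := by
                  rw [← pow_add, Nat.add_sub_cancel' hsc]
                have hspan : span k {f ^ s}
                    = span k {f ^ c} * span k {f ^ (s - c)} := by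
                  rw [span_mul_span, Set.singleton_mul_singleton, ← hfs]
                rw [hspan, mul_assoc]
                have hA : span k {f ^ (s - c)} ≤ homogeneousSubmodule (Fin 2) k (s - c) := by
                  rw [span_le, Set.singleton_subset_iff]
                  exact (mem_homogeneousSubmodule _ _).mpr (by simpa using hf1.pow (s - c))
                have hB : homogeneousSubmodule (Fin 2) k (s - c)
                      * homogeneousSubmodule (Fin 2) k (m - s)
                    ≤ homogeneousSubmodule (Fin 2) k (m - c) := by
                  refine le_trans (homogeneousSubmodule_mul _ _) ?_
                  have heq : s - c + (m - s) = m - c := by omega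
                  rw [heq]
                exact mul_le_mul' le_rfl
                  (le_trans (mul_le_mul' hA le_rfl) hB)
      · have hm0 : 0 < m := hm
        set z : Fin m := ⟨0, hm0⟩ with hz
        set v : ℤ := i - (c : ℤ) * (b - a) - m * a + b with hv
        set t₁ : Fin m → ℤ := fun h =>
          (if h = z then v - b else 0) + (if (h : ℕ) < c then b - a else 0) + a with ht₁
        have e2 : ∑ h : Fin m, (if (h : ℕ) < c then b - a else (0 : ℤ)) = (c : ℤ) * (b - a) := by
          rw [sum_ite_card]
          simp [Fintype.card_fin, card_lt_filter m c hcm]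
        have hsum : ∑ h, t₁ h = i := by
          simp only [ht₁, Finset.sum_add_distrib, Finset.sum_ite_eq', Finset.mem_univ, if_true,
            Finset.sum_const, Finset.card_univ, Fintype.card_fin, nsmul_eq_mul, e2]
          rw [hv]; ring
        have hval : ∀ h, W (t₁ h)
            = (if (h : ℕ) < c then span k {f} else homogeneousSubmodule (Fin 2) k 1) := by
          intro h
          by_cases hhz : h = z
          · have hzc : ((h : ℕ) : ℕ) < c := by
              rw [hhz]; simp [hz]; omega
            rw [if_pos hzc]
            apply hWb
            · have htv : t₁ h = v := by
                show ((if h = z then v - b else 0) + if (h : ℕ) < c then b - a else 0) + a = v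
                rw [show ((if h = z then v - b else 0) + if (h : ℕ) < c then b - a else 0) + a
                    = v - b + (b - a) + a from by rw [if_pos hhz, if_pos hzc]]
                ring
              rw [htv, hv]
              nlinarith [hcub, hcC, hclb]
            · have htv : t₁ h = v := by
                show ((if h = z then v - b else 0) + if (h : ℕ) < c then b - a else 0) + a = v
                rw [show ((if h = z then v - b else 0) + if (h : ℕ) < c then b - a else 0) + a
                    = v - b + (b - a) + a from by rw [if_pos hhz, if_pos hzc]]
                ring
              rw [htv, hv]
              nlinarith [hcub, hcC]
          · by_cases hlt : (h : ℕ) < c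
            · rw [if_pos hlt]
              apply hWb
              · have htb : t₁ h = b := by simp [ht₁, hhz, hlt]
                rw [htb]; exact hab
              · have htb : t₁ h = b := by simp [ht₁, hhz, hlt]
                rw [htb]
            · rw [if_neg hlt]
              apply hWa
              have : t₁ h = a := by simp [ht₁, hhz, hlt]
              rw [this]
        have hprod : ∏ h, W (t₁ h) = M := by
          rw [Finset.prod_congr rfl (fun h _ => hval h), prod_ite_card]
          simp only [Fintype.card_fin, card_lt_filter m c hcm]
          rw [span_singleton_pow', hom_pow]
        exact le_iSup₂_of_le t₁ hsum hprod.ge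
    rw [hTM, hM]
    ext g
    simp only [SetLike.mem_coe, Set.mem_setOf_eq]
    constructor
    · intro hg
      exact mem_of_mem_span_pow_mul_hom hf1 hcm hg
    · rintro ⟨hg1, hg2⟩
      exact mem_span_pow_mul_hom hf1 hcm hg1 hg2
  · -- Part 3 : b*m < i
    intro hi
    apply le_antisymm _ bot_le
    apply iSup₂_le; intro t ht
    have ht' : ∑ h, t h = i := ht
    obtain ⟨h0, hh0⟩ : ∃ h, b < t h := by
      by_contra hcon
      push_neg at hcon
      have hle : ∑ h, t h ≤ ∑ h : Fin m, b := Finset.sum_le_sum fun h _ => hcon h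
      rw [ht'] at hle
      simp only [Finset.sum_const, Finset.card_univ, Fintype.card_fin, nsmul_eq_mul] at hle
      nlinarith
    have hzero : ∏ h, W (t h) = 0 :=
      Finset.prod_eq_zero (Finset.mem_univ h0) (by rw [hWc _ hh0, Submodule.zero_eq_bot])
    rw [hzero, Submodule.zero_eq_bot]
end
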